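/- Let s₁ > 0, A₁ > 0, and let ρ be a Borel measure on (0,∞) with ∫ dρ(s)/(1+s) < ∞. Define v(x) = ∫₀^∞ dρ(s)/(x+s) − A₁/(x+s₁) for x > 0, and assume v is not identically zero on (0,∞). Then the derivative v′ has at most two zeros in (0,∞), and the derivative of x ↦ x·v(x) has at most two zeros in (0,∞). -/

import Mathlib

open MeasureTheory Set Filter Metric
open scoped NNReal ENNReal


/- ### pointwise bounds -/

lemma base_inv {δ x s : ℝ} (hδ : 0 < δ) (hx : δ ≤ x) (hs : 0 ≤ s) :
    (x + s)⁻¹ ≤ (1 + δ⁻¹) * (1 + s)⁻¹ := by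
  have hxs : 0 < x + s := by linarith
  have h1s : (0:ℝ) < 1 + s := by linarith
  have key : 1 + s ≤ (1 + δ⁻¹) * (x + s) := by
    have h1 : 1 ≤ δ⁻¹ * x := by
      rw [← div_eq_inv_mul]
      exact (one_le_div hδ).2 hx
    have h2 : 0 ≤ δ⁻¹ * s := by positivity
    nlinarith
  calc (x+s)⁻¹ = (1+s) * (1+s)⁻¹ * (x+s)⁻¹ := by
        rw [mul_inv_cancel₀ h1s.ne', one_mul]
    _ ≤ ((1+δ⁻¹)*(x+s)) * (1+s)⁻¹ * (x+s)⁻¹ := by gcongr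
    _ = (1+δ⁻¹) * (1+s)⁻¹ * ((x+s) * (x+s)⁻¹) := by ring
    _ = (1+δ⁻¹) * (1+s)⁻¹ := by rw [mul_inv_cancel₀ hxs.ne', mul_one]

lemma base_abs {δ x s s₁ : ℝ} (hδ : 0 < δ) (hx : δ ≤ x) (hs : 0 ≤ s) (hs₁ : 0 < s₁) :
    |s - s₁| ≤ (1 + s₁ * δ⁻¹) * (x + s) := by
  have hxs : 0 < x + s := by linarith
  have h1 : |s - s₁| ≤ s + s₁ := abs_le.2 ⟨by linarith, by linarith⟩
  have h2 : 1 ≤ δ⁻¹ * (x + s) := by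
    rw [← div_eq_inv_mul]
    exact (one_le_div hδ).2 (by linarith)
  nlinarith

lemma base_invx {δ x s : ℝ} (hδ : 0 < δ) (hx : δ ≤ x) (hs : 0 ≤ s) :
    (x + s)⁻¹ ≤ δ⁻¹ := by
  apply inv_anti₀ hδ; linarith

lemma bnd_pow2 {δ x s : ℝ} (hδ : 0 < δ) (hx : δ ≤ x) (hs : 0 ≤ s) :
    ((x+s)^2)⁻¹ ≤ (1+δ⁻¹)^2 * ((1+s)^2)⁻¹ := by
  have h := base_inv hδ hx hs
  have hxs : 0 < x + s := by linarith
  calc ((x+s)^2)⁻¹ = ((x+s)⁻¹)^2 := by rw [inv_pow]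
    _ ≤ ((1+δ⁻¹)*(1+s)⁻¹)^2 := by
        apply pow_le_pow_left₀ (by positivity) h
    _ = (1+δ⁻¹)^2 * ((1+s)^2)⁻¹ := by rw [mul_pow, inv_pow]

lemma bnd_pow3 {δ x s : ℝ} (hδ : 0 < δ) (hx : δ ≤ x) (hs : 0 ≤ s) :
    ((x+s)^3)⁻¹ ≤ δ⁻¹ * ((1+δ⁻¹)^2 * ((1+s)^2)⁻¹) := by
  have hxs : 0 < x + s := by linarith
  calc ((x+s)^3)⁻¹ = (x+s)⁻¹ * ((x+s)^2)⁻¹ := by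
        rw [← mul_inv]; ring_nf
    _ ≤ δ⁻¹ * ((1+δ⁻¹)^2 * ((1+s)^2)⁻¹) := by
        apply mul_le_mul (base_invx hδ hx hs) (bnd_pow2 hδ hx hs) (by positivity) (by positivity)

lemma bnd_N {δ x s s₁ : ℝ} (hδ : 0 < δ) (hx : δ ≤ x) (hs : 0 ≤ s) (hs₁ : 0 < s₁) :
    |s - s₁| * ((x+s)^3)⁻¹ ≤ (1+s₁*δ⁻¹) * ((1+δ⁻¹)^2 * ((1+s)^2)⁻¹) := by
  have hxs : 0 < x + s := by linarith
  calc |s - s₁| * ((x+s)^3)⁻¹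
      ≤ ((1 + s₁ * δ⁻¹) * (x + s)) * ((x+s)^3)⁻¹ := by
        apply mul_le_mul_of_nonneg_right (base_abs hδ hx hs hs₁) (by positivity)
    _ = (1 + s₁ * δ⁻¹) * ((x+s) * ((x+s)^3)⁻¹) := by ring
    _ = (1 + s₁ * δ⁻¹) * ((x+s)^2)⁻¹ := by
        congr 1
        field_simp
    _ ≤ (1+s₁*δ⁻¹) * ((1+δ⁻¹)^2 * ((1+s)^2)⁻¹) := by
        apply mul_le_mul_of_nonneg_left (bnd_pow2 hδ hx hs) (by positivity)

lemma bnd_N4 {δ x s s₁ : ℝ} (hδ : 0 < δ) (hx : δ ≤ x) (hs : 0 ≤ s) (hs₁ : 0 < s₁) :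
    |s - s₁| * ((x+s)^4)⁻¹ ≤ (1+s₁*δ⁻¹) * (δ⁻¹ * ((1+δ⁻¹)^2 * ((1+s)^2)⁻¹)) := by
  have hxs : 0 < x + s := by linarith
  calc |s - s₁| * ((x+s)^4)⁻¹
      ≤ ((1 + s₁ * δ⁻¹) * (x + s)) * ((x+s)^4)⁻¹ := by
        apply mul_le_mul_of_nonneg_right (base_abs hδ hx hs hs₁) (by positivity)
    _ = (1 + s₁ * δ⁻¹) * ((x+s) * ((x+s)^4)⁻¹) := by ring
    _ = (1 + s₁ * δ⁻¹) * ((x+s)^3)⁻¹ := by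
        congr 1
        field_simp
    _ ≤ (1+s₁*δ⁻¹) * (δ⁻¹ * ((1+δ⁻¹)^2 * ((1+s)^2)⁻¹)) := by
        apply mul_le_mul_of_nonneg_left (bnd_pow3 hδ hx hs) (by positivity)

lemma bnd_M {δ x s s₁ : ℝ} (hδ : 0 < δ) (hx : δ ≤ x) (hs : 0 ≤ s) (hs₁ : 0 < s₁) :
    (s - s₁)^2 * ((x+s)^4)⁻¹ ≤ (1+s₁*δ⁻¹)^2 * ((1+δ⁻¹)^2 * ((1+s)^2)⁻¹) := by
  have hxs : 0 < x + s := by linarith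
  calc (s - s₁)^2 * ((x+s)^4)⁻¹ = (|s - s₁|)^2 * ((x+s)^4)⁻¹ := by rw [sq_abs]
    _ ≤ ((1 + s₁ * δ⁻¹) * (x + s))^2 * ((x+s)^4)⁻¹ := by
        apply mul_le_mul_of_nonneg_right
          (pow_le_pow_left₀ (abs_nonneg _) (base_abs hδ hx hs hs₁) 2) (by positivity)
    _ = (1 + s₁ * δ⁻¹)^2 * ((x+s)^2 * ((x+s)^4)⁻¹) := by ring
    _ = (1 + s₁ * δ⁻¹)^2 * ((x+s)^2)⁻¹ := by
        congr 1
        field_simp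
    _ ≤ (1+s₁*δ⁻¹)^2 * ((1+δ⁻¹)^2 * ((1+s)^2)⁻¹) := by
        apply mul_le_mul_of_nonneg_left (bnd_pow2 hδ hx hs) (by positivity)

lemma ae_pos' (μ : Measure ℝ) (hsupp : μ (Set.Iic 0) = 0) : ∀ᵐ s ∂μ, 0 < s := by
  rw [ae_iff]
  convert hsupp using 2
  ext s
  simp [not_lt]

/- ### generic integrability from bound by (1+s)^(-2) -/

lemma integrable_of_bound2 {μ : Measure ℝ}
    (hint : Integrable (fun s => ((1+s)^2)⁻¹) μ) {f : ℝ → ℝ}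
    (hm : AEStronglyMeasurable f μ) {C : ℝ}
    (h : ∀ᵐ s ∂μ, ‖f s‖ ≤ C * ((1+s)^2)⁻¹) : Integrable f μ :=
  (hint.const_mul C).mono' hm h

lemma meas_pow_inv (x : ℝ) (n : ℕ) : Measurable (fun s : ℝ => ((x+s)^n)⁻¹) :=
  ((measurable_const.add measurable_id).pow_const n).inv

/- integrability lemmas -/

lemma L2 {μ : Measure ℝ} (hsupp : μ (Set.Iic 0) = 0)
    (hint : Integrable (fun s => ((1+s)^2)⁻¹) μ) {x : ℝ} (hx : 0 < x) :
    Integrable (fun s => ((x+s)^2)⁻¹) μ := by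
  refine integrable_of_bound2 (C := (1+x⁻¹)^2) hint ((meas_pow_inv x 2).aestronglyMeasurable) ?_
  filter_upwards [ae_pos' μ hsupp] with s hs
  rw [Real.norm_eq_abs, abs_of_nonneg (by positivity)]
  exact bnd_pow2 hx le_rfl hs.le

lemma L3 {μ : Measure ℝ} (hsupp : μ (Set.Iic 0) = 0)
    (hint : Integrable (fun s => ((1+s)^2)⁻¹) μ) {x : ℝ} (hx : 0 < x) :
    Integrable (fun s => ((x+s)^3)⁻¹) μ := by
  refine integrable_of_bound2 (C := x⁻¹ * (1+x⁻¹)^2) hint ((meas_pow_inv x 3).aestronglyMeasurable) ?_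
  filter_upwards [ae_pos' μ hsupp] with s hs
  rw [Real.norm_eq_abs, abs_of_nonneg (by positivity)]
  calc ((x+s)^3)⁻¹ ≤ x⁻¹ * ((1+x⁻¹)^2 * ((1+s)^2)⁻¹) := bnd_pow3 hx le_rfl hs.le
    _ = (x⁻¹ * (1+x⁻¹)^2) * ((1+s)^2)⁻¹ := by ring

lemma LN {μ : Measure ℝ} (hsupp : μ (Set.Iic 0) = 0)
    (hint : Integrable (fun s => ((1+s)^2)⁻¹) μ) (s₁ : ℝ) (hs₁ : 0 < s₁) {x : ℝ} (hx : 0 < x) :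
    Integrable (fun s => (s - s₁) * ((x+s)^3)⁻¹) μ := by
  refine integrable_of_bound2 (C := (1+s₁*x⁻¹) * (1+x⁻¹)^2) hint
    (((measurable_id.sub measurable_const).mul (meas_pow_inv x 3)).aestronglyMeasurable) ?_
  filter_upwards [ae_pos' μ hsupp] with s hs
  have hxs : 0 < x + s := by linarith
  rw [Real.norm_eq_abs, abs_mul, abs_of_nonneg (a := ((x+s)^3)⁻¹) (by positivity)]
  calc |s - s₁| * ((x+s)^3)⁻¹ ≤ (1+s₁*x⁻¹) * ((1+x⁻¹)^2 * ((1+s)^2)⁻¹) :=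
        bnd_N hx le_rfl hs.le hs₁
    _ = ((1+s₁*x⁻¹) * (1+x⁻¹)^2) * ((1+s)^2)⁻¹ := by ring

lemma LN4 {μ : Measure ℝ} (hsupp : μ (Set.Iic 0) = 0)
    (hint : Integrable (fun s => ((1+s)^2)⁻¹) μ) (s₁ : ℝ) (hs₁ : 0 < s₁) {x : ℝ} (hx : 0 < x) :
    Integrable (fun s => (s - s₁) * ((x+s)^4)⁻¹) μ := by
  refine integrable_of_bound2 (C := (1+s₁*x⁻¹) * (x⁻¹ * (1+x⁻¹)^2)) hint
    (((measurable_id.sub measurable_const).mul (meas_pow_inv x 4)).aestronglyMeasurable) ?_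
  filter_upwards [ae_pos' μ hsupp] with s hs
  have hxs : 0 < x + s := by linarith
  rw [Real.norm_eq_abs, abs_mul, abs_of_nonneg (a := ((x+s)^4)⁻¹) (by positivity)]
  calc |s - s₁| * ((x+s)^4)⁻¹ ≤ (1+s₁*x⁻¹) * (x⁻¹ * ((1+x⁻¹)^2 * ((1+s)^2)⁻¹)) :=
        bnd_N4 hx le_rfl hs.le hs₁
    _ = ((1+s₁*x⁻¹) * (x⁻¹ * (1+x⁻¹)^2)) * ((1+s)^2)⁻¹ := by ring

lemma LM {μ : Measure ℝ} (hsupp : μ (Set.Iic 0) = 0)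
    (hint : Integrable (fun s => ((1+s)^2)⁻¹) μ) (s₁ : ℝ) (hs₁ : 0 < s₁) {x : ℝ} (hx : 0 < x) :
    Integrable (fun s => (s - s₁)^2 * ((x+s)^4)⁻¹) μ := by
  refine integrable_of_bound2 (C := (1+s₁*x⁻¹)^2 * (1+x⁻¹)^2) hint
    ((((measurable_id.sub measurable_const).pow_const 2).mul
      (meas_pow_inv x 4)).aestronglyMeasurable) ?_
  filter_upwards [ae_pos' μ hsupp] with s hs
  have hxs : 0 < x + s := by linarith
  rw [Real.norm_eq_abs, abs_of_nonneg (by positivity)]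
  calc (s - s₁)^2 * ((x+s)^4)⁻¹ ≤ (1+s₁*x⁻¹)^2 * ((1+x⁻¹)^2 * ((1+s)^2)⁻¹) :=
        bnd_M hx le_rfl hs.le hs₁
    _ = ((1+s₁*x⁻¹)^2 * (1+x⁻¹)^2) * ((1+s)^2)⁻¹ := by ring

lemma meas_inv (x : ℝ) : Measurable (fun s : ℝ => (x+s)⁻¹) :=
  (measurable_const.add measurable_id).inv

/-- integrability of (x+s)⁻¹ w.r.t. ρ -/
lemma L1' {ρ : Measure ℝ} (hsupp : ρ (Set.Iic 0) = 0)
    (hint : Integrable (fun s => (1+s)⁻¹) ρ) {x : ℝ} (hx : 0 < x) :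
    Integrable (fun s => (x+s)⁻¹) ρ := by
  refine ((hint.const_mul (1+x⁻¹)).mono' (meas_inv x).aestronglyMeasurable ?_)
  filter_upwards [ae_pos' ρ hsupp] with s hs
  have hxs : 0 < x + s := by linarith
  rw [Real.norm_eq_abs, abs_of_nonneg (by positivity)]
  exact base_inv hx le_rfl hs.le

/-- integrability of (x+s)⁻² w.r.t. ρ -/
lemma L2' {ρ : Measure ℝ} (hsupp : ρ (Set.Iic 0) = 0)
    (hint : Integrable (fun s => (1+s)⁻¹) ρ) {x : ℝ} (hx : 0 < x) :
    Integrable (fun s => ((x+s)^2)⁻¹) ρ := by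
  refine ((hint.const_mul (x⁻¹ * (1+x⁻¹))).mono'
    (meas_pow_inv x 2).aestronglyMeasurable ?_)
  filter_upwards [ae_pos' ρ hsupp] with s hs
  have hxs : 0 < x + s := by linarith
  rw [Real.norm_eq_abs, abs_of_nonneg (by positivity)]
  calc ((x+s)^2)⁻¹ = (x+s)⁻¹ * (x+s)⁻¹ := by rw [← mul_inv]; ring_nf
    _ ≤ x⁻¹ * ((1+x⁻¹) * (1+s)⁻¹) :=
        mul_le_mul (base_invx hx le_rfl hs.le) (base_inv hx le_rfl hs.le)
          (by positivity) (by positivity)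
    _ = x⁻¹ * (1+x⁻¹) * (1+s)⁻¹ := by ring

/-- weaker integrability: (1+s)⁻² from (1+s)⁻¹ -/
lemma int2_of_int1 {ρ : Measure ℝ} (hsupp : ρ (Set.Iic 0) = 0)
    (hint : Integrable (fun s => (1+s)⁻¹) ρ) :
    Integrable (fun s => ((1+s)^2)⁻¹) ρ := by
  refine (hint.mono' (meas_pow_inv 1 2).aestronglyMeasurable ?_)
  filter_upwards [ae_pos' ρ hsupp] with s hs
  have h1s : (0:ℝ) < 1 + s := by linarith
  rw [Real.norm_eq_abs, abs_of_nonneg (by positivity)]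
  calc ((1+s)^2)⁻¹ = (1+s)⁻¹ * (1+s)⁻¹ := by rw [← mul_inv]; ring_nf
    _ ≤ 1 * (1+s)⁻¹ := by
        apply mul_le_mul_of_nonneg_right _ (by positivity)
        rw [inv_le_one_iff₀]; right; linarith
    _ = (1+s)⁻¹ := one_mul _

/-- Derivative of ∫ (x+s)⁻¹ dρ. -/
lemma DV {ρ : Measure ℝ} (hsupp : ρ (Set.Iic 0) = 0)
    (hint : Integrable (fun s => (1+s)⁻¹) ρ) {x : ℝ} (hx : 0 < x) :
    HasDerivAt (fun y => ∫ s, (y+s)⁻¹ ∂ρ)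
      (∫ s, -(((x+s)^2)⁻¹) ∂ρ) x := by
  have hδ : 0 < x/2 := by linarith
  refine (hasDerivAt_integral_of_dominated_loc_of_deriv_le (F := fun y s => (y+s)⁻¹)
    (F' := fun y s => -(((y+s)^2)⁻¹))
    (bound := fun s => (x/2)⁻¹ * ((1+(x/2)⁻¹) * (1+s)⁻¹))
    (ball_mem_nhds x (half_pos hx)) (Eventually.of_forall fun y => (meas_inv y).aestronglyMeasurable)
    (L1' hsupp hint hx) ((meas_pow_inv x 2).neg.aestronglyMeasurable)
    ?_ ?_ ?_).2
  · filter_upwards [ae_pos' ρ hsupp] with s hs y hy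
    rw [Real.ball_eq_Ioo] at hy
    have hy2 : x/2 ≤ y := le_of_lt (by linarith [hy.1])
    have hys : 0 < y + s := by linarith
    rw [Real.norm_eq_abs, abs_neg, abs_of_nonneg (by positivity)]
    calc ((y+s)^2)⁻¹ = (y+s)⁻¹ * (y+s)⁻¹ := by rw [← mul_inv]; ring_nf
      _ ≤ (x/2)⁻¹ * ((1+(x/2)⁻¹) * (1+s)⁻¹) :=
          mul_le_mul (base_invx hδ hy2 hs.le) (base_inv hδ hy2 hs.le)
            (by positivity) (by positivity)
  · exact (hint.const_mul ((x/2)⁻¹ * (1+(x/2)⁻¹))).congr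
      (Eventually.of_forall fun s => by ring)
  · filter_upwards [ae_pos' ρ hsupp] with s hs y hy
    rw [Real.ball_eq_Ioo] at hy
    have hys : 0 < y + s := by linarith [hy.1]
    have h := ((hasDerivAt_id y).add_const s).inv (by positivity : (0:ℝ) < y + s).ne'
    refine h.congr_deriv ?_
    simp only [id, Pi.pow_apply]
    field_simp

/-- Derivative of W(x) = ∫ (x+s)⁻² dμ. -/
lemma D1 {μ : Measure ℝ} (hsupp : μ (Set.Iic 0) = 0)
    (hint : Integrable (fun s => ((1+s)^2)⁻¹) μ) {x : ℝ} (hx : 0 < x) :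
    HasDerivAt (fun y => ∫ s, ((y+s)^2)⁻¹ ∂μ)
      (∫ s, (-2) * ((x+s)^3)⁻¹ ∂μ) x := by
  have hδ : 0 < x/2 := by linarith
  refine (hasDerivAt_integral_of_dominated_loc_of_deriv_le (F := fun y s => ((y+s)^2)⁻¹)
    (F' := fun y s => (-2) * ((y+s)^3)⁻¹)
    (bound := fun s => 2 * ((x/2)⁻¹ * ((1+(x/2)⁻¹)^2 * ((1+s)^2)⁻¹)))
    (ball_mem_nhds x (half_pos hx)) (Eventually.of_forall fun y => (meas_pow_inv y 2).aestronglyMeasurable)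
    (L2 hsupp hint hx) ((measurable_const.mul (meas_pow_inv x 3)).aestronglyMeasurable)
    ?_ ?_ ?_).2
  · filter_upwards [ae_pos' μ hsupp] with s hs y hy
    rw [Real.ball_eq_Ioo] at hy
    have hy2 : x/2 ≤ y := by linarith [hy.1]
    have hys : 0 < y + s := by linarith
    rw [Real.norm_eq_abs, abs_mul, abs_of_nonneg (a := ((y+s)^3)⁻¹) (by positivity)]
    have : |(-2 : ℝ)| = 2 := by norm_num
    rw [this]
    have h3 := bnd_pow3 hδ hy2 hs.le
    nlinarith [h3]
  · exact (hint.const_mul (2 * ((x/2)⁻¹ * (1+(x/2)⁻¹)^2))).congr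
      (Eventually.of_forall fun s => by ring)
  · filter_upwards [ae_pos' μ hsupp] with s hs y hy
    rw [Real.ball_eq_Ioo] at hy
    have hys : 0 < y + s := by linarith [hy.1]
    have h := (((hasDerivAt_id y).add_const s).pow 2).inv (pow_ne_zero _ hys.ne')
    refine h.congr_deriv ?_
    simp only [id, Pi.pow_apply]
    field_simp
    ring

/-- Derivative of N(x) = ∫ (s-s₁) (x+s)⁻³ dμ. -/
lemma D2 {μ : Measure ℝ} (hsupp : μ (Set.Iic 0) = 0)
    (hint : Integrable (fun s => ((1+s)^2)⁻¹) μ) {s₁ : ℝ} (hs₁ : 0 < s₁) {x : ℝ} (hx : 0 < x) :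
    HasDerivAt (fun y => ∫ s, (s - s₁) * ((y+s)^3)⁻¹ ∂μ)
      (∫ s, (-3) * ((s - s₁) * ((x+s)^4)⁻¹) ∂μ) x := by
  have hδ : 0 < x/2 := by linarith
  refine (hasDerivAt_integral_of_dominated_loc_of_deriv_le
    (F := fun y s => (s - s₁) * ((y+s)^3)⁻¹)
    (F' := fun y s => (-3) * ((s - s₁) * ((y+s)^4)⁻¹))
    (bound := fun s => 3 * ((1+s₁*(x/2)⁻¹) * ((x/2)⁻¹ * ((1+(x/2)⁻¹)^2 * ((1+s)^2)⁻¹))))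
    (ball_mem_nhds x (half_pos hx))
    (Eventually.of_forall fun y =>
      ((measurable_id.sub measurable_const).mul (meas_pow_inv y 3)).aestronglyMeasurable)
    (LN hsupp hint s₁ hs₁ hx)
    ((measurable_const.mul
      ((measurable_id.sub measurable_const).mul (meas_pow_inv x 4))).aestronglyMeasurable)
    ?_ ?_ ?_).2
  · filter_upwards [ae_pos' μ hsupp] with s hs y hy
    rw [Real.ball_eq_Ioo] at hy
    have hy2 : x/2 ≤ y := by linarith [hy.1]
    have hys : 0 < y + s := by linarith
    rw [Real.norm_eq_abs, abs_mul, abs_mul, abs_of_nonneg (a := ((y+s)^4)⁻¹) (by positivity)]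
    have h2 : |(-3 : ℝ)| = 3 := by norm_num
    rw [h2]
    have h3 := bnd_N4 hδ hy2 hs.le hs₁
    nlinarith [h3]
  · exact (hint.const_mul (3 * ((1+s₁*(x/2)⁻¹) * ((x/2)⁻¹ * (1+(x/2)⁻¹)^2)))).congr
      (Eventually.of_forall fun s => by ring)
  · filter_upwards [ae_pos' μ hsupp] with s hs y hy
    rw [Real.ball_eq_Ioo] at hy
    have hys : 0 < y + s := by linarith [hy.1]
    have h := ((((hasDerivAt_id y).add_const s).pow 3).inv (pow_ne_zero _ hys.ne')).const_mul (s - s₁)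
    refine h.congr_deriv ?_
    simp only [id, Pi.pow_apply]
    field_simp
    ring

/-- Derivative of g(x) = (x+s₁)² W(x). -/
lemma D3 {μ : Measure ℝ} (hsupp : μ (Set.Iic 0) = 0)
    (hint : Integrable (fun s => ((1+s)^2)⁻¹) μ) {s₁ : ℝ} (hs₁ : 0 < s₁) {x : ℝ} (hx : 0 < x) :
    HasDerivAt (fun y => (y+s₁)^2 * ∫ s, ((y+s)^2)⁻¹ ∂μ)
      (2*(x+s₁) * ∫ s, (s - s₁) * ((x+s)^3)⁻¹ ∂μ) x := by
  have hp : HasDerivAt (fun y : ℝ => (y+s₁)^2) (2*(x+s₁)) x := by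
    have h0 := ((hasDerivAt_id x).add_const s₁).pow 2
    refine h0.congr_deriv ?_
    norm_num
  have hprod := hp.mul (D1 hsupp hint hx)
  refine hprod.congr_deriv ?_
  symm
  rw [← integral_const_mul, ← integral_const_mul, ← integral_const_mul,
    ← integral_add ((L2 hsupp hint hx).const_mul (2*(x+s₁)))
      (((L3 hsupp hint hx).const_mul ((x+s₁)^2 * (-2))).congr
        (Eventually.of_forall fun s => by ring))]
  · refine integral_congr_ae ?_
    filter_upwards [ae_pos' μ hsupp] with s hs
    have hxs : 0 < x + s := by linarith
    field_simp
    ring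

/-- Derivative of M(x) = (x+s₁)³ N(x). -/
lemma D4 {μ : Measure ℝ} (hsupp : μ (Set.Iic 0) = 0)
    (hint : Integrable (fun s => ((1+s)^2)⁻¹) μ) {s₁ : ℝ} (hs₁ : 0 < s₁) {x : ℝ} (hx : 0 < x) :
    HasDerivAt (fun y => (y+s₁)^3 * ∫ s, (s - s₁) * ((y+s)^3)⁻¹ ∂μ)
      (3*(x+s₁)^2 * ∫ s, (s - s₁)^2 * ((x+s)^4)⁻¹ ∂μ) x := by
  have hp : HasDerivAt (fun y : ℝ => (y+s₁)^3) (3*(x+s₁)^2) x := by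
    have h0 := ((hasDerivAt_id x).add_const s₁).pow 3
    refine h0.congr_deriv ?_
    norm_num
  have hprod := hp.mul (D2 hsupp hint hs₁ hx)
  refine hprod.congr_deriv ?_
  symm
  rw [← integral_const_mul, ← integral_const_mul, ← integral_const_mul,
    ← integral_add ((LN hsupp hint s₁ hs₁ hx).const_mul (3*(x+s₁)^2))
      (((LN4 hsupp hint s₁ hs₁ hx).const_mul ((x+s₁)^3 * (-3))).congr
        (Eventually.of_forall fun s => by ring))]
  · refine integral_congr_ae ?_
    filter_upwards [ae_pos' μ hsupp] with s hs
    have hxs : 0 < x + s := by linarith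
    field_simp
    ring

/-- positivity of ∫ (s-s₁)² (x+s)⁻⁴ when μ is not concentrated at s₁ -/
lemma intpos {μ : Measure ℝ} (hsupp : μ (Set.Iic 0) = 0)
    (hint : Integrable (fun s => ((1+s)^2)⁻¹) μ) {s₁ : ℝ} (hs₁ : 0 < s₁)
    (hne : μ {s | s ≠ s₁} ≠ 0) {x : ℝ} (hx : 0 < x) :
    0 < ∫ s, (s - s₁)^2 * ((x+s)^4)⁻¹ ∂μ := by
  rw [integral_pos_iff_support_of_nonneg_ae
    (Eventually.of_forall fun s => by positivity) (LM hsupp hint s₁ hs₁ hx)]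
  have hsub : {s : ℝ | 0 < s ∧ s ≠ s₁} ⊆ Function.support fun s => (s - s₁)^2 * ((x+s)^4)⁻¹ := by
    rintro s ⟨h1, h2⟩
    have hxs : 0 < x + s := by linarith
    exact mul_ne_zero (pow_ne_zero _ (sub_ne_zero.2 h2)) (inv_ne_zero (by positivity))
  have hpos : μ {s : ℝ | 0 < s ∧ s ≠ s₁} ≠ 0 := by
    intro h0
    apply hne
    have hcover : {s : ℝ | s ≠ s₁} ⊆ {s : ℝ | 0 < s ∧ s ≠ s₁} ∪ Set.Iic 0 := by
      intro s hs
      by_cases h : 0 < s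
      · exact Or.inl ⟨h, hs⟩
      · exact Or.inr (not_lt.1 h)
    refine le_antisymm ?_ (by simp)
    calc μ {s | s ≠ s₁} ≤ μ ({s : ℝ | 0 < s ∧ s ≠ s₁} ∪ Set.Iic 0) := measure_mono hcover
      _ ≤ μ {s : ℝ | 0 < s ∧ s ≠ s₁} + μ (Set.Iic 0) := measure_union_le _ _
      _ = 0 := by rw [h0, hsupp, add_zero]
  exact lt_of_lt_of_le (pos_iff_ne_zero.2 hpos) (measure_mono hsub)

/-- at most two points helper -/
lemma subset_pair {Z : Set ℝ}
    (h : ∀ x ∈ Z, ∀ y ∈ Z, ∀ z ∈ Z, x < y → y < z → False) :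
    ∃ a b : ℝ, Z ⊆ {a, b} := by
  rcases Z.eq_empty_or_nonempty with hZ | ⟨a, ha⟩
  · exact ⟨0, 0, by simp [hZ]⟩
  by_cases hb : ∃ b ∈ Z, b ≠ a
  · obtain ⟨b, hbZ, hba⟩ := hb
    refine ⟨a, b, fun z hz => ?_⟩
    by_contra hzc
    simp only [Set.mem_insert_iff, Set.mem_singleton_iff, not_or] at hzc
    obtain ⟨hza, hzb⟩ := hzc
    -- a, b, z pairwise distinct, all in Z
    rcases lt_trichotomy a b with h1 | h1 | h1
    · rcases lt_trichotomy z a with h2 | h2 | h2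
      · exact h z hz a ha b hbZ h2 h1
      · exact hza h2
      · rcases lt_trichotomy z b with h3 | h3 | h3
        · exact h a ha z hz b hbZ h2 h3
        · exact hzb h3
        · exact h a ha b hbZ z hz h1 h3
    · exact hba h1.symm
    · rcases lt_trichotomy z b with h2 | h2 | h2
      · exact h z hz b hbZ a ha h2 h1
      · exact hzb h2
      · rcases lt_trichotomy z a with h3 | h3 | h3
        · exact h b hbZ z hz a ha h2 h3
        · exact hza h3
        · exact h b hbZ a ha z hz h1 h3
  · push_neg at hb
    exact ⟨a, a, fun z hz => by simp [hb z hz]⟩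

/-- The key counting lemma. -/
lemma key_lemma {μ : Measure ℝ} (hsupp : μ (Set.Iic 0) = 0)
    (hint : Integrable (fun s => ((1+s)^2)⁻¹) μ) {s₁ : ℝ} (hs₁ : 0 < s₁) (A : ℝ) :
    (∃ a b : ℝ, {x : ℝ | 0 < x ∧ ∫ s, ((x+s)^2)⁻¹ ∂μ = A * ((x+s₁)^2)⁻¹} ⊆ {a, b}) ∨
    ((∀ᵐ s ∂μ, s = s₁) ∧ (μ Set.univ).toReal = A) := by
  by_cases hdeg : ∀ᵐ s ∂μ, s = s₁
  · by_cases hA : (μ Set.univ).toReal = A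
    · exact Or.inr ⟨hdeg, hA⟩
    · left
      refine ⟨0, 0, fun z hz => absurd ?_ hA⟩
      obtain ⟨hz0, hzeq⟩ := hz
      have hz1 : (0:ℝ) < z + s₁ := by linarith
      have h1 : ∫ s, ((z+s)^2)⁻¹ ∂μ = ∫ s, ((z+s₁)^2)⁻¹ ∂μ :=
        integral_congr_ae (hdeg.mono fun s hs => by rw [hs])
      rw [h1, integral_const, smul_eq_mul] at hzeq
      exact mul_right_cancel₀ (inv_ne_zero (by positivity)) hzeq
  · left
    have hne : μ {s | s ≠ s₁} ≠ 0 := by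
      rw [ae_iff] at hdeg
      exact hdeg
    have hMmono : StrictMonoOn
        (fun t => (t+s₁)^3 * ∫ s, (s - s₁) * ((t+s)^3)⁻¹ ∂μ) (Set.Ioi 0) := by
      apply strictMonoOn_of_hasDerivWithinAt_pos (convex_Ioi 0)
        (f' := fun t => 3*(t+s₁)^2 * ∫ s, (s - s₁)^2 * ((t+s)^4)⁻¹ ∂μ)
      · intro t ht
        exact (D4 hsupp hint hs₁ ht).continuousAt.continuousWithinAt
      · intro t ht
        rw [interior_Ioi] at ht
        exact ((D4 hsupp hint hs₁ ht).hasDerivWithinAt).mono interior_subset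
      · intro t ht
        rw [interior_Ioi] at ht
        have ht0 : (0:ℝ) < t := ht
        have h1 : (0:ℝ) < t + s₁ := by linarith
        exact mul_pos (by nlinarith) (intpos hsupp hint hs₁ hne ht)
    have hro : ∀ u w : ℝ, 0 < u → u < w →
        (∫ s, ((u+s)^2)⁻¹ ∂μ = A * ((u+s₁)^2)⁻¹) →
        (∫ s, ((w+s)^2)⁻¹ ∂μ = A * ((w+s₁)^2)⁻¹) →
        ∃ c ∈ Set.Ioo u w, (c+s₁)^3 * ∫ s, (s - s₁) * ((c+s)^3)⁻¹ ∂μ = 0 := by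
      intro u w hu huw hequ heqw
      have hw : 0 < w := hu.trans huw
      have hcont : ContinuousOn (fun t => (t+s₁)^2 * ∫ s, ((t+s)^2)⁻¹ ∂μ) (Set.Icc u w) :=
        fun t ht =>
          (D3 hsupp hint hs₁ (lt_of_lt_of_le hu ht.1)).continuousAt.continuousWithinAt
      have hgu : (u+s₁)^2 * ∫ s, ((u+s)^2)⁻¹ ∂μ = A := by
        rw [hequ]
        have : (0:ℝ) < u + s₁ := by linarith
        field_simp
      have hgw : (w+s₁)^2 * ∫ s, ((w+s)^2)⁻¹ ∂μ = A := by
        rw [heqw]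
        have : (0:ℝ) < w + s₁ := by linarith
        field_simp
      obtain ⟨c, hc, hc0⟩ := exists_deriv_eq_zero huw hcont (hgu.trans hgw.symm)
      have hcpos : 0 < c := hu.trans hc.1
      have hderiv := (D3 hsupp hint hs₁ hcpos).deriv
      rw [hderiv] at hc0
      rcases mul_eq_zero.1 hc0 with h | h
      · exfalso
        have : (0:ℝ) < 2*(c+s₁) := by positivity
        exact this.ne' h
      · exact ⟨c, hc, by rw [h, mul_zero]⟩
    apply subset_pair
    rintro x ⟨hx0, hxeq⟩ y ⟨hy0, hyeq⟩ z ⟨hz0, hzeq⟩ hxy hyz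
    obtain ⟨c₁, hc₁, hM₁⟩ := hro x y hx0 hxy hxeq hyeq
    obtain ⟨c₂, hc₂, hM₂⟩ := hro y z hy0 hyz hyeq hzeq
    have hlt := hMmono (Set.mem_Ioi.2 (hx0.trans hc₁.1) : c₁ ∈ Set.Ioi 0)
      (Set.mem_Ioi.2 (hy0.trans hc₂.1) : c₂ ∈ Set.Ioi 0) (hc₁.2.trans hc₂.1)
    simp only [hM₁, hM₂] at hlt
    exact lt_irrefl 0 hlt

theorem zeros_of_derivatives_at_most_two
    (s₁ A₁ : ℝ) (hs₁ : 0 < s₁) (hA₁ : 0 < A₁)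
    (ρ : Measure ℝ) (hρsupp : ρ (Set.Iic 0) = 0)
    (hρint : Integrable (fun s => 1 / (1 + s)) ρ)
    (v : ℝ → ℝ)
    (hv : ∀ x, 0 < x → v x = (∫ s, 1 / (x + s) ∂ρ) - A₁ / (x + s₁))
    (hnontriv : ¬ ∀ x, 0 < x → v x = 0) :
    (∃ a b : ℝ, {x : ℝ | 0 < x ∧ deriv v x = 0} ⊆ {a, b}) ∧
      (∃ a b : ℝ, {x : ℝ | 0 < x ∧ deriv (fun y => y * v y) x = 0} ⊆ {a, b}) := by
  have hint1 : Integrable (fun s => (1+s)⁻¹) ρ := by simpa [one_div] using hρint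
  have hint2 : Integrable (fun s => ((1+s)^2)⁻¹) ρ := int2_of_int1 hρsupp hint1
  set f : ℝ → ℝ := fun y => (∫ s, (y+s)⁻¹ ∂ρ) - A₁ * (y+s₁)⁻¹ with hf
  have hvf : ∀ x, 0 < x → v x = f x := by
    intro x hx
    rw [hv x hx, hf]
    simp only [one_div, div_eq_mul_inv, one_mul]
  have hev : ∀ {x : ℝ}, 0 < x → v =ᶠ[nhds x] f := by
    intro x hx
    exact eventually_of_mem (isOpen_Ioi.mem_nhds hx) (fun y hy => hvf y hy)
  have hdf : ∀ {x : ℝ}, 0 < x → HasDerivAt f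
      ((∫ s, -(((x+s)^2)⁻¹) ∂ρ) - A₁ * (-1 / (x+s₁)^2)) x := by
    intro x hx
    have h1 : (0:ℝ) < x + s₁ := by linarith
    exact (DV hρsupp hint1 hx).sub
      ((((hasDerivAt_id x).add_const s₁).inv h1.ne').const_mul A₁)
  -- formula for v x in the degenerate case
  have hdegcase : (∀ᵐ s ∂ρ, s = s₁) → (ρ Set.univ).toReal = A₁ → False := by
    intro hdeg hmass
    apply hnontriv
    intro x hx
    have h1 : (0:ℝ) < x + s₁ := by linarith
    rw [hvf x hx]
    show (∫ s, (x+s)⁻¹ ∂ρ) - A₁ * (x+s₁)⁻¹ = 0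
    have h2 : ∫ s, (x+s)⁻¹ ∂ρ = ∫ s, (x+s₁)⁻¹ ∂ρ :=
      integral_congr_ae (hdeg.mono fun s hs => by rw [hs])
    rw [h2, integral_const, smul_eq_mul, measureReal_def, hmass]
    ring
  constructor
  · -- Part 1
    rcases key_lemma hρsupp hint2 hs₁ A₁ with ⟨a, b, hab⟩ | ⟨hdeg, hmass⟩
    · refine ⟨a, b, fun x hx => hab ⟨hx.1, ?_⟩⟩
      obtain ⟨hx0, hx1⟩ := hx
      have hvd : HasDerivAt v ((∫ s, -(((x+s)^2)⁻¹) ∂ρ) - A₁ * (-1 / (x+s₁)^2)) x :=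
        (hdf hx0).congr_of_eventuallyEq (hev hx0)
      have hval := hvd.deriv
      rw [hx1] at hval
      rw [integral_neg] at hval
      have h1 : (0:ℝ) < x + s₁ := by linarith
      have h2 : A₁ * (-1/(x+s₁)^2) = -(A₁ * ((x+s₁)^2)⁻¹) := by
        field_simp
      rw [h2] at hval
      linarith [hval]
    · exact (hdegcase hdeg hmass).elim
  · -- Part 2
    set μ₂ : Measure ℝ := ρ.withDensity (fun s => ((Real.toNNReal s : ℝ≥0) : ℝ≥0∞)) with hμ₂
    have hμ₂supp : μ₂ (Set.Iic 0) = 0 := by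
      rw [hμ₂, withDensity_apply _ measurableSet_Iic, Measure.restrict_eq_zero.2 hρsupp,
        lintegral_zero_measure]
    have htrans : ∀ g : ℝ → ℝ, ∫ s, g s ∂μ₂ = ∫ s, (Real.toNNReal s : ℝ) * g s ∂ρ := by
      intro g
      rw [hμ₂, integral_withDensity_eq_integral_smul measurable_real_toNNReal g]
      simp_rw [NNReal.smul_def, smul_eq_mul]
    have hμ₂int : Integrable (fun s => ((1+s)^2)⁻¹) μ₂ := by
      rw [hμ₂, integrable_withDensity_iff_integrable_coe_smul measurable_real_toNNReal]
      refine hint1.mono'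
        ((measurable_real_toNNReal.coe_nnreal_real.mul (meas_pow_inv 1 2)).aestronglyMeasurable)
        ?_
      filter_upwards [ae_pos' ρ hρsupp] with s hs
      have h1s : (0:ℝ) < 1 + s := by linarith
      rw [smul_eq_mul, Real.norm_eq_abs, Real.coe_toNNReal _ hs.le,
        abs_of_nonneg (by positivity)]
      have hident : (1+s) * ((1+s)^2)⁻¹ = (1+s)⁻¹ := by
        rw [sq, mul_inv, ← mul_assoc, mul_inv_cancel₀ h1s.ne', one_mul]
      calc s * ((1+s)^2)⁻¹ ≤ (1+s) * ((1+s)^2)⁻¹ := by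
            apply mul_le_mul_of_nonneg_right (by linarith) (by positivity)
        _ = (1+s)⁻¹ := hident
    -- identify the derivative of y * v y
    have hstep : ∀ {x : ℝ}, 0 < x → deriv (fun y => y * v y) x =
        (∫ s, ((x+s)^2)⁻¹ ∂μ₂) - (A₁*s₁) * ((x+s₁)^2)⁻¹ := by
      intro x hx
      have h1 : (0:ℝ) < x + s₁ := by linarith
      have hprod : HasDerivAt (fun y => y * f y)
          (1 * f x + x * ((∫ s, -(((x+s)^2)⁻¹) ∂ρ) - A₁ * (-1 / (x+s₁)^2))) x :=
        (hasDerivAt_id x).mul (hdf hx)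
      have hev2 : (fun y => y * v y) =ᶠ[nhds x] (fun y => y * f y) :=
        (hev hx).mono fun y hy => by simp only [hy]
      have hvd := (hprod.congr_of_eventuallyEq hev2).deriv
      rw [hvd]
      show 1 * ((∫ s, (x+s)⁻¹ ∂ρ) - A₁ * (x+s₁)⁻¹)
          + x * ((∫ s, -(((x+s)^2)⁻¹) ∂ρ) - A₁ * (-1 / (x+s₁)^2)) = _
      rw [integral_neg]
      have hJ : ∫ s, ((x+s)^2)⁻¹ ∂μ₂ = (∫ s, (x+s)⁻¹ ∂ρ) - x * ∫ s, ((x+s)^2)⁻¹ ∂ρ := by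
        rw [htrans, ← integral_const_mul, ← integral_sub (L1' hρsupp hint1 hx)
          ((L2' hρsupp hint1 hx).const_mul x)]
        refine integral_congr_ae ?_
        filter_upwards [ae_pos' ρ hρsupp] with s hs
        have hxs : (0:ℝ) < x + s := by linarith
        rw [Real.coe_toNNReal _ hs.le]
        field_simp
        ring
      rw [hJ]
      field_simp
      ring
    rcases key_lemma hμ₂supp hμ₂int hs₁ (A₁*s₁) with ⟨a, b, hab⟩ | ⟨hdeg₂, hmass₂⟩
    · refine ⟨a, b, fun x hx => hab ⟨hx.1, ?_⟩⟩
      obtain ⟨hx0, hx1⟩ := hx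
      rw [hstep hx0] at hx1
      linarith [hx1]
    · -- degenerate case for μ₂
      exfalso
      -- first: ρ-a.e. s = s₁
      have hms : MeasurableSet {s : ℝ | ¬ s = s₁} := (measurableSet_singleton s₁).compl
      have h0 : μ₂ {s : ℝ | ¬ s = s₁} = 0 := ae_iff.mp hdeg₂
      rw [hμ₂, withDensity_apply _ hms] at h0
      rw [lintegral_eq_zero_iff measurable_real_toNNReal.coe_nnreal_ennreal] at h0
      have hres : ∀ᵐ s ∂(ρ.restrict {s : ℝ | ¬ s = s₁}), (0:ℝ) < s :=
        ae_restrict_of_ae (ae_pos' ρ hρsupp)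
      have hFalse : ∀ᵐ s ∂(ρ.restrict {s : ℝ | ¬ s = s₁}), False := by
        filter_upwards [h0, hres] with s h1 h2
        have : (Real.toNNReal s : ℝ≥0∞) ≠ 0 := by
          simp only [ne_eq, ENNReal.coe_eq_zero]
          exact (Real.toNNReal_pos.2 h2).ne'
        exact this h1
      have hz : ρ {s : ℝ | ¬ s = s₁} = 0 := by
        have := ae_iff.mp hFalse
        simpa [Measure.restrict_apply_univ] using this
      have hdegρ : ∀ᵐ s ∂ρ, s = s₁ := ae_iff.mpr hz
      -- mass
      have hμ₂univ : μ₂ Set.univ = (Real.toNNReal s₁ : ℝ≥0∞) * ρ Set.univ := by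
        rw [hμ₂, withDensity_apply _ MeasurableSet.univ, Measure.restrict_univ]
        have hcg : ∫⁻ s, ((Real.toNNReal s : ℝ≥0) : ℝ≥0∞) ∂ρ
            = ∫⁻ s, ((Real.toNNReal s₁ : ℝ≥0) : ℝ≥0∞) ∂ρ :=
          lintegral_congr_ae (hdegρ.mono fun s hs => by rw [hs])
        rw [hcg]
        exact lintegral_const _
      rw [hμ₂univ] at hmass₂
      rcases eq_top_or_lt_top (ρ Set.univ) with htop | hfin
      · rw [htop, ENNReal.mul_top (by
          simp only [ne_eq, ENNReal.coe_eq_zero]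
          exact (Real.toNNReal_pos.2 hs₁).ne')] at hmass₂
        rw [ENNReal.toReal_top] at hmass₂
        nlinarith
      · rw [ENNReal.toReal_mul, ENNReal.coe_toReal, Real.coe_toNNReal _ hs₁.le] at hmass₂
        have hmassρ : (ρ Set.univ).toReal = A₁ := by
          have := mul_left_cancel₀ hs₁.ne' (by linarith [hmass₂] : s₁ * (ρ Set.univ).toReal = s₁ * A₁)
          exact this
        exact hdegcase hdegρ hmassρ
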